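/- The first-column entries of X_n = B_n^{-1} A_n satisfy X_n(2,1) = ακ/2 - 1 and X_n(i,1) = ακ/i for i = 3,…,n. -/

import Mathlib

/-- a_i = -(i+α+1)(i+κ+1) -/
def acoef (α κ : ℝ) (i : ℕ) : ℝ := -(((i : ℝ) + α + 1) * ((i : ℝ) + κ + 1))

/-- b_i = i(2i+α+κ+1)+(i+α+1)(i+κ+1) -/
def bcoef (α κ : ℝ) (i : ℕ) : ℝ :=
  (i : ℝ) * (2 * (i : ℝ) + α + κ + 1) + ((i : ℝ) + α + 1) * ((i : ℝ) + κ + 1)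

/-- c_i = -i(3i+α+κ) -/
def ccoef (α κ : ℝ) (i : ℕ) : ℝ := -((i : ℝ) * (3 * (i : ℝ) + α + κ))

/-- d_i = (i-1)i -/
def dcoef (i : ℕ) : ℝ := ((i : ℝ) - 1) * (i : ℝ)

/-- The banded matrix `A_n` of the four-term recurrence: with 1-based
indices, `A_n(i,i) = b_{i-1}`, `A_n(i,i+1) = a_{i-1}`, `A_n(i+1,i) = c_i`,
`A_n(i+2,i) = d_{i+1}`.  Here `i : Fin n` is the 0-based index, so the
coefficient index coincides with the 0-based row index. -/
def Amat (α κ : ℝ) (n : ℕ) : Matrix (Fin n) (Fin n) ℝ := fun i j =>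
  if (i : ℕ) = (j : ℕ) then bcoef α κ i
  else if (j : ℕ) = (i : ℕ) + 1 then acoef α κ i
  else if (i : ℕ) = (j : ℕ) + 1 then ccoef α κ i
  else if (i : ℕ) = (j : ℕ) + 2 then dcoef i
  else 0

/-- The lower bidiagonal matrix `B_n` with diagonal entries
`e_{i-1} = i` (1-based) and subdiagonal entries `f_i = -i`. -/
def Bmat (n : ℕ) : Matrix (Fin n) (Fin n) ℝ := fun i j =>
  if (i : ℕ) = (j : ℕ) then ((i : ℕ) : ℝ) + 1
  else if (i : ℕ) = (j : ℕ) + 1 then -((i : ℕ) : ℝ)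
  else 0

/-- `X_n = B_n⁻¹ A_n`. -/
noncomputable def Xmat (α κ : ℝ) (n : ℕ) : Matrix (Fin n) (Fin n) ℝ :=
  (Bmat n)⁻¹ * Amat α κ n

/-- First-column entries (1-based): `X_n(2,1) = ακ/2 - 1` and
`X_n(i,1) = ακ/i` for `i = 3,…,n`. -/
noncomputable def Cmat (n : ℕ) : Matrix (Fin n) (Fin n) ℝ := fun i j =>
  if (j : ℕ) ≤ (i : ℕ) then 1 / (((i : ℕ) : ℝ) + 1) else 0

lemma fin_sum_indicator (n c : ℕ) (v : ℝ) :
    (∑ k : Fin n, if (k : ℕ) = c then v else 0) = if c < n then v else 0 := by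
  rw [Fin.sum_univ_eq_sum_range (fun m => if m = c then v else 0)]
  rw [Finset.sum_ite_eq' (Finset.range n) c (fun _ => v)]
  simp

lemma CB (n : ℕ) : Cmat n * Bmat n = 1 := by
  ext i j
  rw [Matrix.mul_apply]
  have h : ∀ k : Fin n, Cmat n i k * Bmat n k j =
      (if (k : ℕ) = (j : ℕ) then
        (if (j : ℕ) ≤ (i : ℕ) then (((j : ℕ) : ℝ) + 1) / (((i : ℕ) : ℝ) + 1) else 0) else 0)
      + (if (k : ℕ) = (j : ℕ) + 1 then
        (if (j : ℕ) + 1 ≤ (i : ℕ) then -((((j : ℕ) : ℝ) + 1) / (((i : ℕ) : ℝ) + 1)) else 0) else 0) := by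
    intro k
    simp only [Cmat, Bmat]
    split_ifs <;> simp_all <;> push_cast <;> ring
  rw [Finset.sum_congr rfl (fun k _ => h k), Finset.sum_add_distrib,
    fin_sum_indicator, fin_sum_indicator, Matrix.one_apply]
  have hj : (j : ℕ) < n := j.2
  have hi : (i : ℕ) < n := i.2
  have hii : ((i : ℕ) : ℝ) + 1 ≠ 0 := by positivity
  by_cases hij : i = j
  · subst hij
    rw [if_pos rfl, if_pos hi, if_pos le_rfl, div_self hii]
    have hno : ¬ ((i : ℕ) + 1 ≤ (i : ℕ)) := by omega
    simp [hno]
  · have hij' : (i : ℕ) ≠ (j : ℕ) := fun h => hij (Fin.ext h)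
    rw [if_neg hij, if_pos hj]
    rcases Nat.lt_or_ge (i : ℕ) (j : ℕ) with hlt | hge
    · have h1 : ¬ ((j : ℕ) ≤ (i : ℕ)) := by omega
      have h2 : ¬ ((j : ℕ) + 1 ≤ (i : ℕ)) := by omega
      simp [h1, h2]
    · have hlt2 : (j : ℕ) < (i : ℕ) := by omega
      have h1 : (j : ℕ) ≤ (i : ℕ) := by omega
      have h2 : (j : ℕ) + 1 ≤ (i : ℕ) := by omega
      have h3 : (j : ℕ) + 1 < n := by omega
      rw [if_pos h1, if_pos h3, if_pos h2]
      ring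

lemma Binv (n : ℕ) : (Bmat n)⁻¹ = Cmat n := Matrix.inv_eq_left_inv (CB n)

lemma Xcol (α κ : ℝ) (n : ℕ) (hn : 1 ≤ n) (m : Fin n) :
    Xmat α κ n m ⟨0, by omega⟩ =
      (if (0:ℕ) < n then 1 / (((m : ℕ) : ℝ) + 1) * bcoef α κ 0 else 0)
      + (if 1 < n then (if 1 ≤ (m : ℕ) then 1 / (((m : ℕ) : ℝ) + 1) else 0) * ccoef α κ 1 else 0)
      + (if 2 < n then (if 2 ≤ (m : ℕ) then 1 / (((m : ℕ) : ℝ) + 1) else 0) * dcoef 2 else 0) := by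
  rw [Xmat, Binv, Matrix.mul_apply]
  have h : ∀ k : Fin n, Cmat n m k * Amat α κ n k ⟨0, by omega⟩ =
      (if (k : ℕ) = 0 then 1 / (((m : ℕ) : ℝ) + 1) * bcoef α κ 0 else 0)
      + (if (k : ℕ) = 1 then (if 1 ≤ (m : ℕ) then 1 / (((m : ℕ) : ℝ) + 1) else 0) * ccoef α κ 1 else 0)
      + (if (k : ℕ) = 2 then (if 2 ≤ (m : ℕ) then 1 / (((m : ℕ) : ℝ) + 1) else 0) * dcoef 2 else 0) := by
    intro k
    simp only [Cmat, Amat]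
    split_ifs <;> simp_all <;> push_cast <;> ring
  rw [Finset.sum_congr rfl (fun k _ => h k), Finset.sum_add_distrib, Finset.sum_add_distrib,
    fin_sum_indicator, fin_sum_indicator, fin_sum_indicator]

theorem Xmat_first_column (α κ : ℝ) (n : ℕ) (hn : 2 ≤ n) :
    Xmat α κ n ⟨1, by omega⟩ ⟨0, by omega⟩ = α * κ / 2 - 1 ∧
    (∀ i : ℕ, ∀ _h3 : 3 ≤ i, ∀ _hi : i ≤ n,
      Xmat α κ n ⟨i - 1, by omega⟩ ⟨0, by omega⟩ = α * κ / (i : ℝ)) := by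
  constructor
  · rw [Xcol α κ n (by omega) ⟨1, by omega⟩]
    have h0 : (0:ℕ) < n := by omega
    have h1 : 1 < n := by omega
    have hm : ((⟨1, by omega⟩ : Fin n) : ℕ) = 1 := rfl
    rw [hm, if_pos h0, if_pos h1, if_pos le_rfl]
    have hno : ¬ (2 ≤ 1) := by omega
    rw [if_neg hno]
    simp only [bcoef, ccoef, dcoef]
    by_cases h2 : 2 < n
    · rw [if_pos h2]
      norm_num
      ring
    · rw [if_neg h2]
      norm_num
      ring
  · intro i h3 hi
    rw [Xcol α κ n (by omega) ⟨i - 1, by omega⟩]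
    have h0 : (0:ℕ) < n := by omega
    have h1 : 1 < n := by omega
    have h2 : 2 < n := by omega
    have hm : ((⟨i - 1, by omega⟩ : Fin n) : ℕ) = i - 1 := rfl
    have hge1 : 1 ≤ i - 1 := by omega
    have hge2 : 2 ≤ i - 1 := by omega
    rw [hm, if_pos h0, if_pos h1, if_pos h2, if_pos hge1, if_pos hge2]
    simp only [bcoef, ccoef, dcoef]
    have hcast : ((i - 1 : ℕ) : ℝ) = (i : ℝ) - 1 := by
      push_cast [Nat.cast_sub (by omega : 1 ≤ i)]; ring
    rw [hcast]
    have hne : (i : ℝ) ≠ 0 := by positivity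
    field_simp
    ring_nf
    field_simp
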